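/- Quantitative Riemann–Lebesgue lemma, case p = 1 (Remark 3 (i)): Let f ∈ L¹_A(ℝ₊) on the Jacobi hypergroup. Then there exists a positive constant c such that for every δ > 0, ess sup_{x > 1/δ} |𝓕(f)(x)| ≤ c ω_{A,1}(f)(δ). -/

import Mathlib

open MeasureTheory Set Filter

/-- The `L^p` norm on `(0,∞)` with respect to the weighted measure `w(x) dx`. -/
noncomputable def wLpNorm (w : ℝ → ℝ) (p : ℝ) (f : ℝ → ℂ) : ℝ :=
  (∫ x in Set.Ioi (0 : ℝ), ‖f x‖ ^ p * w x) ^ (1 / p)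

/-- Membership in `L^p((0,∞), w(x) dx)`. -/
def MemW (w : ℝ → ℝ) (p : ℝ) (f : ℝ → ℂ) : Prop :=
  AEMeasurable f (volume.restrict (Set.Ioi (0 : ℝ))) ∧
    IntegrableOn (fun x => ‖f x‖ ^ p * w x) (Set.Ioi (0 : ℝ))

/-- The Jacobi hypergroup setting: the Chébli–Trimèche hypergroup `(ℝ₊, ∗(A))` with
`A(x) = 2^(2ρ) (sinh x)^(2α+1) (cosh x)^(2β+1)`, `α ≥ β ≥ -1/2`, `α ≠ -1/2`,
`ρ = α + β + 1`.  Its characters are the Jacobi functions `φ_λ`, satisfying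
`|1 - φ_λ(t)| ≥ c₀ min{1, (λt)²}`.  The density `cden = |c(λ)|⁻²` is even, continuous
and comparable to `|λ|^(2α+1)` for `|λ| > k` and to `|λ|²` for `|λ| ≤ k`.  The
generalized Fourier transform `FT` is given on `L¹_A` by
`𝓕(f)(λ) = ∫₀^∞ f(x) φ_λ(x) A(x) dx`; it satisfies `‖𝓕 f‖_∞ ≤ ‖f‖_{A,1}`, the
Hausdorff–Young inequality, the Hardy–Littlewood inequality of Lemma 1 and the
translation identity `𝓕(τ_δ f)(λ) = φ_λ(δ) 𝓕(f)(λ)`, where the generalized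
translations `τ_δ` are `L^p_A`-contractions. -/
structure JacobiHypergroup where
  α : ℝ
  β : ℝ
  ρ : ℝ
  hβα : β ≤ α
  hβ : -(1/2) ≤ β
  hα : α ≠ -(1/2)
  hρ : ρ = α + β + 1
  /-- the weight function `A` of the Jacobi hypergroup -/
  A : ℝ → ℝ
  hA : ∀ x : ℝ, 0 ≤ x →
    A x = (2 : ℝ) ^ (2 * ρ) * Real.sinh x ^ (2 * α + 1) * Real.cosh x ^ (2 * β + 1)
  /-- the Jacobi functions `φ_λ`, the characters of the hypergroup -/
  φ : ℝ → ℝ → ℂ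
  c₀ : ℝ
  hc₀ : 0 < c₀
  hφ_lower : ∀ lam t : ℝ, 0 < t →
    c₀ * min 1 ((lam * t) ^ 2) ≤ ‖1 - φ lam t‖
  /-- the density `|c(λ)|⁻²` of the Plancherel measure -/
  cden : ℝ → ℝ
  hcden_cont : Continuous cden
  hcden_even : ∀ x : ℝ, cden (-x) = cden x
  k : ℝ
  k₁ : ℝ
  k₂ : ℝ
  hk : 0 < k
  hk₁ : 0 < k₁
  hk₂ : 0 < k₂
  hcden_hi : ∀ x : ℝ, k < |x| →
    k₁ * |x| ^ (2 * α + 1) ≤ cden x ∧ cden x ≤ k₂ * |x| ^ (2 * α + 1)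
  hcden_lo : ∀ x : ℝ, |x| ≤ k →
    k₁ * |x| ^ (2 : ℝ) ≤ cden x ∧ cden x ≤ k₂ * |x| ^ (2 : ℝ)
  /-- the generalized Fourier transform -/
  FT : (ℝ → ℂ) → ℝ → ℂ
  hFT_def : ∀ f : ℝ → ℂ, MemW A 1 f → ∀ lam : ℝ,
    FT f lam = ∫ x in Set.Ioi (0 : ℝ), f x * φ lam x * (A x : ℂ)
  hFT_meas : ∀ f : ℝ → ℂ, Measurable (FT f)
  hFT_sub : ∀ f g : ℝ → ℂ, ∀ lam : ℝ,
    FT (fun y => f y - g y) lam = FT f lam - FT g lam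
  /-- `‖𝓕 f‖_∞ ≤ ‖f‖_{A,1}` -/
  hFT_sup : ∀ f : ℝ → ℂ, MemW A 1 f → ∀ lam : ℝ,
    ‖FT f lam‖ ≤ wLpNorm A 1 f
  /-- the Hausdorff–Young inequality `‖𝓕 f‖_{c,p'} ≤ C ‖f‖_{A,p}` -/
  hHY : ∀ p p' : ℝ, 1 < p → p ≤ 2 → 1 / p + 1 / p' = 1 →
    ∃ C > (0 : ℝ), ∀ f : ℝ → ℂ, MemW A p f →
      (∫⁻ lam in Set.Ioi (0 : ℝ),
          ENNReal.ofReal (‖FT f lam‖ ^ p' * cden lam)) ^ (1 / p')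
        ≤ ENNReal.ofReal (C * wLpNorm A p f)
  /-- the Hardy–Littlewood inequality of Lemma 1 (with the piecewise weight
  `g(t) = t³` for `t ≤ k`, `g(t) = t^(2(α+1))` for `t > k`) -/
  hHL : ∀ p : ℝ, 1 < p → p ≤ 2 →
    ∃ C > (0 : ℝ), ∀ f : ℝ → ℂ, MemW A p f →
      ∫⁻ x in Set.Ioi (0 : ℝ),
          ENNReal.ofReal ((if x ≤ k then x ^ (3 : ℝ) else x ^ (2 * (α + 1))) ^ (p - 2) *
            ‖FT f x‖ ^ p * cden x)
        ≤ ENNReal.ofReal (C * wLpNorm A p f ^ p)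
  /-- the generalized translation operators -/
  τ : ℝ → (ℝ → ℂ) → ℝ → ℂ
  hτ_contract : ∀ p : ℝ, 1 ≤ p → ∀ (δ : ℝ) (f : ℝ → ℂ), MemW A p f →
    MemW A p (τ δ f) ∧ wLpNorm A p (τ δ f) ≤ wLpNorm A p f
  hτ_diff : ∀ p : ℝ, 1 ≤ p → ∀ (δ : ℝ) (f : ℝ → ℂ), MemW A p f →
    MemW A p (fun y => τ δ f y - f y)
  /-- the translation identity `𝓕(τ_δ f)(λ) = φ_λ(δ) 𝓕(f)(λ)` -/
  hτ_FT : ∀ p : ℝ, 1 ≤ p → p ≤ 2 → ∀ (δ : ℝ) (f : ℝ → ℂ), MemW A p f →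
    ∀ᵐ lam ∂(volume.restrict (Set.Ioi (0 : ℝ))),
      FT (τ δ f) lam = φ lam δ * FT f lam

/-- The modulus of continuity of first order, `ω_{A,p}(f)(δ) = ‖τ_δ f - f‖_{A,p}`. -/
noncomputable def JacobiHypergroup.omega (S : JacobiHypergroup) (p : ℝ)
    (f : ℝ → ℂ) (δ : ℝ) : ℝ :=
  wLpNorm S.A p (fun y => S.τ δ f y - f y)

/-- **Quantitative Riemann–Lebesgue lemma, case p = 1** (Remark 3 (i)): for
`f ∈ L¹_A(ℝ₊)` on the Jacobi hypergroup, there exists `c > 0` such that for every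
`δ > 0`, `ess sup_{x > 1/δ} |𝓕(f)(x)| ≤ c ω_{A,1}(f)(δ)`. -/
theorem riemann_lebesgue_p_eq_one (S : JacobiHypergroup) (f : ℝ → ℂ)
    (hf : MemW S.A 1 f) :
    ∃ c > (0 : ℝ), ∀ δ > (0 : ℝ),
      essSup (fun x : ℝ => ENNReal.ofReal (‖S.FT f x‖))
          (volume.restrict (Set.Ioi (1 / δ)))
        ≤ ENNReal.ofReal (c * S.omega 1 f δ) := by
  refine ⟨S.c₀⁻¹, inv_pos.mpr S.hc₀, fun δ hδ => ?_⟩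
  have hdiff : MemW S.A 1 (fun y => S.τ δ f y - f y) := S.hτ_diff 1 le_rfl δ f hf
  have hsup : ∀ lam : ℝ,
      ‖S.FT (fun y => S.τ δ f y - f y) lam‖
        ≤ S.omega 1 f δ := fun lam => S.hFT_sup _ hdiff lam
  have hτ : ∀ᵐ lam ∂(volume.restrict (Set.Ioi (0 : ℝ))),
      S.FT (S.τ δ f) lam = S.φ lam δ * S.FT f lam :=
    S.hτ_FT 1 le_rfl (by norm_num) δ f hf
  have hsub : Set.Ioi (1 / δ) ⊆ Set.Ioi (0 : ℝ) :=
    Set.Ioi_subset_Ioi (by positivity)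
  have hτ' : ∀ᵐ lam ∂(volume.restrict (Set.Ioi (1 / δ))),
      S.FT (S.τ δ f) lam = S.φ lam δ * S.FT f lam :=
    ae_restrict_of_ae_restrict_of_subset hsub hτ
  have hmem : ∀ᵐ lam ∂(volume.restrict (Set.Ioi (1 / δ))),
      lam ∈ Set.Ioi (1 / δ) := ae_restrict_mem measurableSet_Ioi
  refine essSup_le_of_ae_le _ ?_
  filter_upwards [hτ', hmem] with x hx hxm
  have hx0 : (1 : ℝ) / δ < x := hxm
  have hxδ : 1 < x * δ := by
    rw [div_lt_iff₀ hδ] at hx0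
    linarith
  have hmin : min 1 ((x * δ) ^ 2) = 1 := by
    rw [min_eq_left]
    nlinarith
  have hlow : S.c₀ ≤ ‖1 - S.φ x δ‖ := by
    have := S.hφ_lower x δ hδ
    rwa [hmin, mul_one] at this
  have heq : S.FT (fun y => S.τ δ f y - f y) x = (S.φ x δ - 1) * S.FT f x := by
    rw [S.hFT_sub, hx]
    ring
  have habs : ‖1 - S.φ x δ‖ * ‖S.FT f x‖
      ≤ S.omega 1 f δ := by
    have := hsup x
    rw [heq] at this
    rw [← norm_mul]
    calc ‖(1 - S.φ x δ) * S.FT f x‖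
        = ‖(S.φ x δ - 1) * S.FT f x‖ := by
          rw [show (1 - S.φ x δ) = -(S.φ x δ - 1) by ring, neg_mul, norm_neg]
      _ ≤ _ := this
  have hkey : ‖S.FT f x‖ ≤ S.c₀⁻¹ * S.omega 1 f δ := by
    rw [le_inv_mul_iff₀ S.hc₀]
    calc S.c₀ * ‖S.FT f x‖
        ≤ ‖1 - S.φ x δ‖ * ‖S.FT f x‖ := by
          apply mul_le_mul_of_nonneg_right hlow (norm_nonneg _)
      _ ≤ _ := habs
  exact ENNReal.ofReal_le_ofReal hkey
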